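/- Let n ≥ 1, x ∈ ℝⁿ, j ∈ {1,…,n}, and let a be a random vector in ℝⁿ with i.i.d. N(0,1) entries. Define the random variable X = ‖x‖₂² + 2 x_j² − ⟨a,x⟩² a_j². Then: (i) X ≤ ‖x‖₂² + 2 x_j² ≤ 3‖x‖₂² almost surely; (ii) E[X] = 0; (iii) E[X²] = 20 x_j⁴ + 68 ‖x‖₂² x_j² + 8 ‖x‖₂⁴, and in particular E[X²] ≤ 96 ‖x‖₂⁴. -/

import Mathlib

open MeasureTheory ProbabilityTheory Real Filter Set
open scoped ENNReal NNReal

namespace StdGaussAux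


noncomputable def J (k : ℕ) : ℝ := ∫ x : ℝ, x ^ k * Real.exp (-(1/2 : ℝ) * x ^ 2)

lemma Jint (k : ℕ) : Integrable fun x : ℝ => x ^ k * Real.exp (-(1/2 : ℝ) * x ^ 2) := by
  have h := integrable_rpow_mul_exp_neg_mul_sq (b := (1/2 : ℝ)) one_half_pos
    (s := (k : ℝ)) (by linarith [Nat.cast_nonneg (α := ℝ) k])
  apply h.congr
  filter_upwards with x
  rw [Real.rpow_natCast]

lemma J0 : J 0 = Real.sqrt (2 * π) := by
  simp only [J, pow_zero, one_mul]
  rw [integral_gaussian, show π / (1/2 : ℝ) = 2 * π by ring]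

lemma J_rec (k : ℕ) : J (k + 2) = ((k : ℝ) + 1) * J k := by
  set g : ℝ → ℝ := fun x => x ^ (k+1) * Real.exp (-(1/2 : ℝ) * x ^ 2) with hg
  set f' : ℝ → ℝ := fun x => ((k:ℝ)+1) * (x ^ k * Real.exp (-(1/2 : ℝ) * x ^ 2))
      - x ^ (k+2) * Real.exp (-(1/2 : ℝ) * x ^ 2) with hf'
  have hderiv : ∀ x : ℝ, HasDerivAt g (f' x) x := by
    intro x
    have h1 : HasDerivAt (fun x : ℝ => x ^ (k+1)) (((k:ℝ)+1) * x ^ k) x := by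
      simpa using hasDerivAt_pow (k+1) x
    have h2 : HasDerivAt (fun x : ℝ => Real.exp (-(1/2 : ℝ) * x ^ 2))
        (Real.exp (-(1/2 : ℝ) * x ^ 2) * (-(1/2 : ℝ) * (2 * x))) x := by
      have hx : HasDerivAt (fun x : ℝ => -(1/2 : ℝ) * x ^ 2) (-(1/2:ℝ) * (2 * x)) x := by
        simpa using ((hasDerivAt_pow 2 x).const_mul (-(1/2:ℝ)))
      exact hx.exp
    have := h1.mul h2
    refine this.congr_deriv ?_
    simp only [hf']
    rw [pow_succ x (k+1), pow_succ x k]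
    ring
  have htop : Tendsto g atTop (nhds 0) := by
    have h := rpow_mul_exp_neg_mul_sq_isLittleO_exp_neg (b := (1/2:ℝ)) one_half_pos ((k:ℝ)+1)
    have hlin : Tendsto (fun x : ℝ => -(1/2:ℝ) * x) atTop atBot :=
      Filter.Tendsto.const_mul_atTop_of_neg (by norm_num) tendsto_id
    have h2 : Tendsto (fun x : ℝ => Real.exp (-(1/2:ℝ) * x)) atTop (nhds 0) :=
      Real.tendsto_exp_atBot.comp hlin
    have h3 := h.isBigO.trans_tendsto h2
    apply h3.congr'
    filter_upwards [eventually_ge_atTop (0:ℝ)] with x hx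
    rw [show ((k:ℝ)+1) = ((k+1 : ℕ) : ℝ) by push_cast; ring, Real.rpow_natCast]
  have hbot : Tendsto g atBot (nhds 0) := by
    have h1 : Tendsto (fun x : ℝ => g (-x)) atTop (nhds 0) := by
      have he : (fun x : ℝ => g (-x)) = fun x => (-1 : ℝ) ^ (k+1) * g x := by
        funext x
        show (-x)^(k+1) * Real.exp (-(1/2:ℝ)*(-x)^2) = (-1:ℝ)^(k+1) * (x^(k+1) * Real.exp (-(1/2:ℝ)*x^2))
        rw [neg_pow, neg_sq]
        ring
      rw [he]
      have := htop.const_mul ((-1:ℝ)^(k+1))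
      simpa only [mul_zero] using this
    have h2 := h1.comp tendsto_neg_atBot_atTop
    have he2 : g = (fun x : ℝ => g (-x)) ∘ Neg.neg := by funext y; simp [Function.comp]
    rw [he2]
    exact h2
  have hintf' : Integrable f' := ((Jint k).const_mul _).sub (Jint (k+2))
  have hIoi : ∫ x in Ioi (0:ℝ), f' x = 0 - g 0 :=
    integral_Ioi_of_hasDerivAt_of_tendsto' (fun x _ => hderiv x) hintf'.integrableOn htop
  have hIic : ∫ x in Iic (0:ℝ), f' x = g 0 - 0 :=
    integral_Iic_of_hasDerivAt_of_tendsto' (fun x _ => hderiv x) hintf'.integrableOn hbot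
  have hsum := intervalIntegral.integral_Iic_add_Ioi (b := (0:ℝ)) hintf'.integrableOn hintf'.integrableOn
  rw [hIoi, hIic] at hsum
  have hzero : ∫ x, f' x = 0 := by rw [← hsum]; ring
  rw [hf'] at hzero
  rw [integral_sub (((Jint k).const_mul _)) (Jint (k+2)), integral_const_mul] at hzero
  have : ((k:ℝ)+1) * J k - J (k+2) = 0 := hzero
  linarith



noncomputable def M (k : ℕ) : ℝ := ∫ x, x ^ k ∂(gaussianReal 0 1)

lemma pdf_eq (x : ℝ) : gaussianPDFReal 0 1 x
    = (Real.sqrt (2 * π))⁻¹ * Real.exp (-(1/2 : ℝ) * x ^ 2) := by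
  rw [gaussianPDFReal]
  push_cast
  rw [mul_one]
  congr 1
  congr 1
  ring

lemma gauss_eq : gaussianReal 0 1
    = volume.withDensity (fun x => ((gaussianPDFReal 0 1 x).toNNReal : ℝ≥0∞)) := by
  rw [gaussianReal_of_var_ne_zero 0 one_ne_zero]
  rfl

lemma integral_gauss (f : ℝ → ℝ) : ∫ x, f x ∂(gaussianReal 0 1)
    = ∫ x, gaussianPDFReal 0 1 x * f x := by
  rw [gauss_eq, integral_withDensity_eq_integral_smul
    ((measurable_gaussianPDFReal 0 1).real_toNNReal) f]
  congr 1
  funext x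
  rw [NNReal.smul_def, Real.coe_toNNReal _ (gaussianPDFReal_nonneg 0 1 x), smul_eq_mul]

lemma integrable_gauss_iff (f : ℝ → ℝ) : Integrable f (gaussianReal 0 1)
    ↔ Integrable (fun x => gaussianPDFReal 0 1 x * f x) volume := by
  rw [gauss_eq, integrable_withDensity_iff_integrable_smul
    ((measurable_gaussianPDFReal 0 1).real_toNNReal)]
  constructor <;> intro h <;> apply h.congr <;> filter_upwards with x <;>
    rw [NNReal.smul_def, Real.coe_toNNReal _ (gaussianPDFReal_nonneg 0 1 x)] <;> rfl

lemma Mint (k : ℕ) : Integrable (fun x : ℝ => x ^ k) (gaussianReal 0 1) := by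
  rw [integrable_gauss_iff]
  have := (Jint k).const_mul (Real.sqrt (2 * π))⁻¹
  apply this.congr
  filter_upwards with x
  rw [pdf_eq]
  ring

lemma M_val (k : ℕ) : M k = (Real.sqrt (2 * π))⁻¹ * J k := by
  rw [M, integral_gauss, J, ← integral_const_mul]
  congr 1
  funext x
  rw [pdf_eq]
  ring

lemma sqrt2pi_pos : (0:ℝ) < Real.sqrt (2 * π) := Real.sqrt_pos.mpr (by positivity)

lemma M0 : M 0 = 1 := by
  rw [M_val, J0, inv_mul_cancel₀ (ne_of_gt sqrt2pi_pos)]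

lemma M_rec (k : ℕ) : M (k + 2) = ((k : ℝ) + 1) * M k := by
  rw [M_val, M_val, J_rec]
  ring

lemma M_odd (k : ℕ) (hk : Odd k) : M k = 0 := by
  have hmap : (gaussianReal 0 1).map (fun x : ℝ => -1 * x) = gaussianReal 0 1 := by
    have h := gaussianReal_map_const_mul (μ := 0) (v := 1) (-1 : ℝ)
    have h2 : (⟨(-1:ℝ)^2, sq_nonneg _⟩ : NNReal) * 1 = 1 := by
      ext; norm_num
    simp only [mul_zero] at h
    convert h using 2
    ext; norm_num
  have h3 : M k = ∫ x, (-1 * x) ^ k ∂(gaussianReal 0 1) := by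
    conv_lhs => rw [M, ← hmap]
    rw [integral_map (by fun_prop) (by fun_prop)]
  have h4 : ∫ x, (-1 * x : ℝ) ^ k ∂(gaussianReal 0 1) = -M k := by
    rw [M, ← integral_neg]
    congr 1
    funext x
    rw [neg_one_mul, hk.neg_pow]
  rw [h4] at h3
  linarith

lemma M2 : M 2 = 1 := by have := M_rec 0; rw [M0] at this; norm_num at this; simpa using this
lemma M4 : M 4 = 3 := by have := M_rec 2; rw [M2] at this; norm_num at this; simpa using this
lemma M6 : M 6 = 15 := by have := M_rec 4; rw [M4] at this; norm_num at this; simpa using this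
lemma M8 : M 8 = 105 := by have := M_rec 6; rw [M6] at this; norm_num at this; simpa using this
lemma M1 : M 1 = 0 := M_odd 1 ⟨0, rfl⟩
lemma M3 : M 3 = 0 := M_odd 3 ⟨1, rfl⟩
lemma M5 : M 5 = 0 := M_odd 5 ⟨2, rfl⟩
lemma M7 : M 7 = 0 := M_odd 7 ⟨3, rfl⟩



variable {μ : Measure ℝ} [SigmaFinite μ]

theorem integrable_pi_prod {n : ℕ} (f : Fin n → ℝ → ℝ) (hf : ∀ i, Integrable (f i) μ) :
    Integrable (fun a : Fin n → ℝ => ∏ i, f i (a i)) (Measure.pi fun _ => μ) := by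
  induction n with
  | zero =>
      simp only [Finset.univ_eq_empty, Finset.prod_empty]
      have : IsFiniteMeasure (Measure.pi fun _ : Fin 0 => μ) := by
        constructor
        simp [Measure.pi_univ]
      exact integrable_const 1
  | succ n n_ih =>
      have h := (measurePreserving_piFinSuccAbove (fun _ : Fin (n+1) => μ) 0).symm
      rw [← h.integrable_comp_emb (MeasurableEquiv.measurableEmbedding _)]
      simp_rw [MeasurableEquiv.piFinSuccAbove_symm_apply, Fin.insertNthEquiv,
        Fin.prod_univ_succ, Fin.insertNth_zero]
      simp only [Fin.zero_succAbove, Function.comp_def, Fin.cons_zero, Fin.cons_succ,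
        Equiv.coe_fn_mk]
      have htail : Integrable (fun (y : Fin n → ℝ) => ∏ i, f i.succ (y i))
          (Measure.pi fun _ => μ) := n_ih (fun i => f i.succ) (fun i => hf _)
      exact Integrable.mul_prod (hf 0) htail

theorem integral_pi_prod {n : ℕ} (f : Fin n → ℝ → ℝ) :
    ∫ a : Fin n → ℝ, ∏ i, f i (a i) ∂(Measure.pi fun _ => μ)
      = ∏ i, ∫ x, f i x ∂μ := by
  induction n with
  | zero =>
      simp only [Finset.univ_eq_empty, Finset.prod_empty, integral_const, smul_eq_mul, mul_one]
      simp [measureReal_def, Measure.pi_univ]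
  | succ n n_ih =>
      calc
        _ = ∫ z : ℝ × (Fin n → ℝ),
            f 0 z.1 * ∏ i : Fin n, f i.succ (z.2 i) ∂(μ.prod (Measure.pi fun _ => μ)) := by
          rw [← ((measurePreserving_piFinSuccAbove (fun _ : Fin (n+1) => μ) 0).symm).integral_comp']
          simp_rw [MeasurableEquiv.piFinSuccAbove_symm_apply, Fin.insertNthEquiv,
            Fin.prod_univ_succ, Fin.insertNth_zero]
          simp only [Fin.zero_succAbove, cast_eq, Fin.cons_zero, Fin.cons_succ, Equiv.coe_fn_mk]
        _ = (∫ x, f 0 x ∂μ) * ∏ i : Fin n, ∫ x, f i.succ x ∂μ := by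
          rw [integral_prod_mul (f := f 0) (g := fun y : Fin n → ℝ => ∏ i, f i.succ (y i)),
            n_ih (fun i => f i.succ)]
        _ = ∏ i, ∫ x, f i x ∂μ := by rw [Fin.prod_univ_succ]



noncomputable def μn (n : ℕ) : Measure (Fin n → ℝ) := Measure.pi fun _ => gaussianReal 0 1

instance (n : ℕ) : IsProbabilityMeasure (μn n) := by unfold μn; infer_instance

variable {n : ℕ}

/-- single-exponent function -/
def Ee (i : Fin n) (m : ℕ) : Fin n → ℕ := fun t => if t = i then m else 0

lemma mono_integral (e : Fin n → ℕ) :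
    ∫ a, ∏ t, a t ^ e t ∂(μn n) = ∏ t, M (e t) :=
  integral_pi_prod (fun t y => y ^ e t)

lemma mono_integrable (e : Fin n → ℕ) :
    Integrable (fun a : Fin n → ℝ => ∏ t, a t ^ e t) (μn n) :=
  integrable_pi_prod (fun t y => y ^ e t) (fun t => Mint (e t))

lemma prod_pow_add (e₁ e₂ : Fin n → ℕ) (a : Fin n → ℝ) :
    ∏ t, a t ^ ((e₁ + e₂) t) = (∏ t, a t ^ e₁ t) * ∏ t, a t ^ e₂ t := by
  rw [← Finset.prod_mul_distrib]
  exact Finset.prod_congr rfl fun t _ => by rw [Pi.add_apply, pow_add]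

lemma prod_pow_single (i : Fin n) (m : ℕ) (a : Fin n → ℝ) :
    ∏ t, a t ^ (Ee i m) t = a i ^ m := by
  rw [Finset.prod_eq_single i (fun b _ hb => by simp [Ee, hb])
    (fun h => absurd (Finset.mem_univ i) h)]
  simp [Ee]

lemma prod_M_odd (e : Fin n → ℕ) (t₀ : Fin n) (h : Odd (e t₀)) : ∏ t, M (e t) = 0 :=
  Finset.prod_eq_zero (Finset.mem_univ t₀) (M_odd _ h)

lemma prod_M_single (e : Fin n → ℕ) (t₁ : Fin n) (h : ∀ t, t ≠ t₁ → e t = 0) :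
    ∏ t, M (e t) = M (e t₁) := by
  rw [Finset.prod_eq_single t₁ (fun b _ hb => by rw [h b hb, M0])
    (fun h => absurd (Finset.mem_univ t₁) h)]

lemma prod_M_pair (e : Fin n → ℕ) (t₁ t₂ : Fin n) (h12 : t₁ ≠ t₂)
    (h : ∀ t, t ≠ t₁ → t ≠ t₂ → e t = 0) :
    ∏ t, M (e t) = M (e t₁) * M (e t₂) := by
  have : ∏ t, M (e t) = ∏ t ∈ ({t₁, t₂} : Finset (Fin n)), M (e t) :=
    (Finset.prod_subset (Finset.subset_univ _) (fun t _ ht => by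
      simp only [Finset.mem_insert, Finset.mem_singleton, not_or] at ht
      rw [h t ht.1 ht.2, M0])).symm
  rw [this, Finset.prod_insert (by simpa using h12), Finset.prod_singleton]

lemma prod_M_triple (e : Fin n → ℕ) (t₁ t₂ t₃ : Fin n) (h12 : t₁ ≠ t₂) (h13 : t₁ ≠ t₃)
    (h23 : t₂ ≠ t₃) (h : ∀ t, t ≠ t₁ → t ≠ t₂ → t ≠ t₃ → e t = 0) :
    ∏ t, M (e t) = M (e t₁) * M (e t₂) * M (e t₃) := by
  have : ∏ t, M (e t) = ∏ t ∈ ({t₁, t₂, t₃} : Finset (Fin n)), M (e t) :=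
    (Finset.prod_subset (Finset.subset_univ _) (fun t _ ht => by
      simp only [Finset.mem_insert, Finset.mem_singleton, not_or] at ht
      rw [h t ht.1 ht.2.1 ht.2.2, M0])).symm
  rw [this, Finset.prod_insert (by simp [h12, h13]),
    Finset.prod_insert (by simpa using h23), Finset.prod_singleton, mul_assoc]

variable (j : Fin n)

lemma pow_fun (p : ℕ) (a : Fin n → ℝ) : (a j)^p = ∏ t, a t ^ (Ee j p) t :=
  (prod_pow_single j p a).symm

lemma pair_fun (p : ℕ) (i k : Fin n) (a : Fin n → ℝ) :
    (a j)^p * (a i * a k) = ∏ t, a t ^ ((Ee j p + (Ee i 1 + Ee k 1)) t) := by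
  rw [prod_pow_add, prod_pow_add, prod_pow_single, prod_pow_single, prod_pow_single,
    pow_one, pow_one]

lemma triple_fun (p : ℕ) (i k l : Fin n) (a : Fin n → ℝ) :
    (a j)^p * (a i * (a k * a l)) = ∏ t, a t ^ ((Ee j p + (Ee i 1 + (Ee k 1 + Ee l 1))) t) := by
  rw [prod_pow_add, prod_pow_add, prod_pow_add]
  simp only [prod_pow_single, pow_one]

lemma quad_fun (p : ℕ) (i k l m : Fin n) (a : Fin n → ℝ) :
    (a j)^p * (a i * a k * (a l * a m))
      = ∏ t, a t ^ ((Ee j p + (Ee i 1 + Ee k 1 + (Ee l 1 + Ee m 1))) t) := by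
  rw [prod_pow_add, prod_pow_add, prod_pow_add, prod_pow_add]
  simp only [prod_pow_single, pow_one]

lemma int_pow (p : ℕ) : ∫ a, (a j)^p ∂(μn n) = M p := by
  simp_rw [pow_fun j p]
  rw [mono_integral, prod_M_single _ j (fun t ht => by simp [Ee, ht])]
  simp [Ee]

lemma intg_pow (p : ℕ) : Integrable (fun a : Fin n → ℝ => (a j)^p) (μn n) := by
  simp_rw [pow_fun j p]
  exact mono_integrable _

lemma intg_pair (p : ℕ) (i k : Fin n) :
    Integrable (fun a : Fin n → ℝ => (a j)^p * (a i * a k)) (μn n) := by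
  simp_rw [pair_fun j p i k]
  exact mono_integrable _

lemma intg_triple (p : ℕ) (i k l : Fin n) :
    Integrable (fun a : Fin n → ℝ => (a j)^p * (a i * (a k * a l))) (μn n) := by
  simp_rw [triple_fun j p i k l]
  exact mono_integrable _

lemma intg_quad (p : ℕ) (i k l m : Fin n) :
    Integrable (fun a : Fin n → ℝ => (a j)^p * (a i * a k * (a l * a m))) (μn n) := by
  simp_rw [quad_fun j p i k l m]
  exact mono_integrable _

lemma int_pair (p : ℕ) (i k : Fin n) :
    ∫ a, (a j)^p * (a i * a k) ∂(μn n)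
      = if i = k then (if i = j then M (p + 2) else M p) else 0 := by
  simp_rw [pair_fun j p i k]
  rw [mono_integral]
  by_cases hik : i = k
  · subst hik
    by_cases hij : i = j
    · subst hij
      rw [if_pos rfl, if_pos rfl,
        prod_M_single _ i (fun t ht => by simp [Ee, ht])]
      simp [Ee]
    · rw [if_pos rfl, if_neg hij,
        prod_M_pair _ j i (Ne.symm hij) (fun t htj hti => by simp [Ee, htj, hti])]
      have h1 : (Ee j p + (Ee i 1 + Ee i 1)) j = p := by simp [Ee, Ne.symm hij]
      have h2 : (Ee j p + (Ee i 1 + Ee i 1)) i = 2 := by simp [Ee, hij]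
      rw [h1, h2, M2, mul_one]
  · rw [if_neg hik]
    by_cases hij : i = j
    · subst hij
      have hki : k ≠ i := fun h => hik h.symm
      refine prod_M_odd _ k ?_
      have : (Ee i p + (Ee i 1 + Ee k 1)) k = 1 := by simp [Ee, hki]
      rw [this]; decide
    · refine prod_M_odd _ i ?_
      have : (Ee j p + (Ee i 1 + Ee k 1)) i = 1 := by simp [Ee, hij, hik]
      rw [this]; decide

lemma single_fun (p : ℕ) (i : Fin n) (a : Fin n → ℝ) :
    (a j)^p * a i = ∏ t, a t ^ ((Ee j p + Ee i 1) t) := by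
  rw [prod_pow_add, prod_pow_single, prod_pow_single, pow_one]

lemma intg_single (p : ℕ) (i : Fin n) :
    Integrable (fun a : Fin n → ℝ => (a j)^p * a i) (μn n) := by
  simp_rw [single_fun j p i]
  exact mono_integrable _

lemma int_single_zero (p : ℕ) (i : Fin n) (hi : i ≠ j) :
    ∫ a, (a j)^p * a i ∂(μn n) = 0 := by
  simp_rw [single_fun j p i]
  rw [mono_integral]
  refine prod_M_odd _ i ?_
  have : (Ee j p + Ee i 1) i = 1 := by simp [Ee, hi]
  rw [this]; decide

lemma int_triple_five (i k l : Fin n) (hi : i ≠ j) (hk : k ≠ j) (hl : l ≠ j) :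
    ∫ a, (a j)^5 * (a i * (a k * a l)) ∂(μn n) = 0 := by
  simp_rw [triple_fun j 5 i k l]
  rw [mono_integral]
  refine prod_M_odd _ j ?_
  have : (Ee j 5 + (Ee i 1 + (Ee k 1 + Ee l 1))) j = 5 := by
    simp [Ee, Ne.symm hi, Ne.symm hk, Ne.symm hl]
  rw [this]; decide

lemma int_quad_four (i k l m : Fin n) (hi : i ≠ j) (hk : k ≠ j) (hl : l ≠ j) (hm : m ≠ j) :
    ∫ a, (a j)^4 * (a i * a k * (a l * a m)) ∂(μn n)
      = 3 * ((if i = k then 1 else 0) * (if l = m then 1 else 0)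
           + (if i = l then 1 else 0) * (if k = m then 1 else 0)
           + (if i = m then 1 else 0) * (if k = l then 1 else 0)) := by
  simp_rw [quad_fun j 4 i k l m]
  rw [mono_integral]
  by_cases hik : i = k
  · subst hik
    by_cases hlm : l = m
    · subst hlm
      by_cases hil : i = l
      · subst hil
        rw [prod_M_pair _ j i (Ne.symm hi) (fun t htj hti => by simp [Ee, htj, hti])]
        have h1 : (Ee j 4 + (Ee i 1 + Ee i 1 + (Ee i 1 + Ee i 1))) j = 4 := by
          simp [Ee, Ne.symm hi]
        have h2 : (Ee j 4 + (Ee i 1 + Ee i 1 + (Ee i 1 + Ee i 1))) i = 4 := by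
          simp [Ee, hi]
        rw [h1, h2, M4]
        norm_num
      · rw [prod_M_triple _ j i l (Ne.symm hi) (Ne.symm hl) hil
          (fun t htj hti htl => by simp [Ee, htj, hti, htl])]
        have h1 : (Ee j 4 + (Ee i 1 + Ee i 1 + (Ee l 1 + Ee l 1))) j = 4 := by
          simp [Ee, Ne.symm hi, Ne.symm hl]
        have h2 : (Ee j 4 + (Ee i 1 + Ee i 1 + (Ee l 1 + Ee l 1))) i = 2 := by
          simp [Ee, hi, hil]
        have h3 : (Ee j 4 + (Ee i 1 + Ee i 1 + (Ee l 1 + Ee l 1))) l = 2 := by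
          simp [Ee, hl, Ne.symm hil]
        rw [h1, h2, h3, M4, M2]
        simp [hil]
    · -- i = k, l ≠ m : zero
      have hRHS : (3:ℝ) * ((if i = i then 1 else 0) * (if l = m then 1 else 0)
           + (if i = l then 1 else 0) * (if i = m then 1 else 0)
           + (if i = m then 1 else 0) * (if i = l then 1 else 0)) = 0 := by
        by_cases hil : i = l
        · have him : i ≠ m := fun h => hlm (hil.symm.trans h)
          simp [hlm, him]
        · simp [hlm, hil]
      rw [hRHS]
      refine prod_M_odd _ l ?_
      by_cases hli : l = i
      · have him : i ≠ m := fun h => hlm (hli.trans h)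
        have : (Ee j 4 + (Ee i 1 + Ee i 1 + (Ee l 1 + Ee m 1))) l = 3 := by
          simp [Ee, hl, hli, hi, him]
        rw [this]; decide
      · have : (Ee j 4 + (Ee i 1 + Ee i 1 + (Ee l 1 + Ee m 1))) l = 1 := by
          simp [Ee, hl, hli, fun h => hlm (h : l = m)]
        rw [this]; decide
  · by_cases hlm : l = m
    · subst hlm
      have hRHS : (3:ℝ) * ((if i = k then 1 else 0) * (if l = l then 1 else 0)
           + (if i = l then 1 else 0) * (if k = l then 1 else 0)
           + (if i = l then 1 else 0) * (if k = l then 1 else 0)) = 0 := by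
        by_cases hil : i = l
        · have hkl : k ≠ l := fun h => hik (hil.trans h.symm)
          simp [hik, hkl]
        · simp [hik, hil]
      rw [hRHS]
      refine prod_M_odd _ i ?_
      by_cases hil : i = l
      · have hlk : l ≠ k := fun h => hik (hil.trans h)
        have : (Ee j 4 + (Ee i 1 + Ee k 1 + (Ee l 1 + Ee l 1))) i = 3 := by
          simp [Ee, hi, hik, hil, hl, hlk]
        rw [this]; decide
      · have : (Ee j 4 + (Ee i 1 + Ee k 1 + (Ee l 1 + Ee l 1))) i = 1 := by
          simp [Ee, hi, hik, hil]
        rw [this]; decide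
    · by_cases hil : i = l
      · subst hil
        by_cases hkm : k = m
        · subst hkm
          rw [prod_M_triple _ j i k (Ne.symm hi) (Ne.symm hk) hik
            (fun t htj hti htk => by simp [Ee, htj, hti, htk])]
          have h1 : (Ee j 4 + (Ee i 1 + Ee k 1 + (Ee i 1 + Ee k 1))) j = 4 := by
            simp [Ee, Ne.symm hi, Ne.symm hk]
          have h2 : (Ee j 4 + (Ee i 1 + Ee k 1 + (Ee i 1 + Ee k 1))) i = 2 := by
            simp [Ee, hi, hik]
          have h3 : (Ee j 4 + (Ee i 1 + Ee k 1 + (Ee i 1 + Ee k 1))) k = 2 := by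
            simp [Ee, hk, Ne.symm hik]
          rw [h1, h2, h3, M4, M2]
          simp [hik, hlm]
        · have hRHS : (3:ℝ) * ((if i = k then 1 else 0) * (if i = m then 1 else 0)
             + (if i = i then 1 else 0) * (if k = m then 1 else 0)
             + (if i = m then 1 else 0) * (if k = i then 1 else 0)) = 0 := by
            simp [hik, hkm, hlm]
          rw [hRHS]
          refine prod_M_odd _ k ?_
          have : (Ee j 4 + (Ee i 1 + Ee k 1 + (Ee i 1 + Ee m 1))) k = 1 := by
            simp [Ee, hk, Ne.symm hik, fun h => hkm (h : k = m)]
          rw [this]; decide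
      · by_cases him : i = m
        · subst him
          by_cases hkl : k = l
          · subst hkl
            rw [prod_M_triple _ j i k (Ne.symm hi) (Ne.symm hk) hik
              (fun t htj hti htk => by simp [Ee, htj, hti, htk])]
            have h1 : (Ee j 4 + (Ee i 1 + Ee k 1 + (Ee k 1 + Ee i 1))) j = 4 := by
              simp [Ee, Ne.symm hi, Ne.symm hk]
            have h2 : (Ee j 4 + (Ee i 1 + Ee k 1 + (Ee k 1 + Ee i 1))) i = 2 := by
              simp [Ee, hi, hik]
            have h3 : (Ee j 4 + (Ee i 1 + Ee k 1 + (Ee k 1 + Ee i 1))) k = 2 := by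
              simp [Ee, hk, Ne.symm hik]
            rw [h1, h2, h3, M4, M2]
            simp [hik, hil, Ne.symm hik]
          · have hRHS : (3:ℝ) * ((if i = k then 1 else 0) * (if l = i then 1 else 0)
               + (if i = l then 1 else 0) * (if k = i then 1 else 0)
               + (if i = i then 1 else 0) * (if k = l then 1 else 0)) = 0 := by
              simp [hik, hil, hkl]
            rw [hRHS]
            refine prod_M_odd _ l ?_
            have : (Ee j 4 + (Ee i 1 + Ee k 1 + (Ee l 1 + Ee i 1))) l = 1 := by
              simp [Ee, hl, Ne.symm hil, Ne.symm hkl]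
            rw [this]; decide
        · have hRHS : (3:ℝ) * ((if i = k then 1 else 0) * (if l = m then 1 else 0)
             + (if i = l then 1 else 0) * (if k = m then 1 else 0)
             + (if i = m then 1 else 0) * (if k = l then 1 else 0)) = 0 := by
            simp [hik, hil, him]
          rw [hRHS]
          refine prod_M_odd _ i ?_
          have : (Ee j 4 + (Ee i 1 + Ee k 1 + (Ee l 1 + Ee m 1))) i = 1 := by
            simp [Ee, hi, hik, hil, him]
          rw [this]; decide



lemma E1_fun (x : Fin n → ℝ) (a : Fin n → ℝ) :
    (∑ i, a i * x i)^2 * (a j)^2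
      = ∑ i, ∑ k, (x i * x k) * ((a j)^2 * (a i * a k)) := by
  rw [sq (∑ i, a i * x i), Finset.sum_mul_sum, Finset.sum_mul]
  refine Finset.sum_congr rfl fun i _ => ?_
  rw [Finset.sum_mul]
  refine Finset.sum_congr rfl fun k _ => ?_
  ring

lemma E1_intg (x : Fin n → ℝ) :
    Integrable (fun a : Fin n → ℝ => (∑ i, a i * x i)^2 * (a j)^2) (μn n) := by
  simp_rw [E1_fun j x]
  exact integrable_finset_sum _ fun i _ => integrable_finset_sum _ fun k _ =>
    ((intg_pair j 2 i k).const_mul _)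

lemma E1_val (x : Fin n → ℝ) :
    ∫ a, (∑ i, a i * x i)^2 * (a j)^2 ∂(μn n) = (∑ i, x i ^ 2) + 2 * x j ^ 2 := by
  simp_rw [E1_fun j x]
  rw [integral_finset_sum _ fun i _ => integrable_finset_sum _ fun k _ =>
    ((intg_pair j 2 i k).const_mul _)]
  have h1 : ∀ i : Fin n, ∫ a, ∑ k, (x i * x k) * ((a j)^2 * (a i * a k)) ∂(μn n)
      = x i * x i * (if i = j then 3 else 1) := by
    intro i
    rw [integral_finset_sum _ fun k _ => ((intg_pair j 2 i k).const_mul _)]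
    have h2 : ∀ k : Fin n, ∫ a, (x i * x k) * ((a j)^2 * (a i * a k)) ∂(μn n)
        = (x i * x k) * (if i = k then (if i = j then 3 else 1) else 0) := by
      intro k
      rw [integral_const_mul, int_pair j 2 i k]
      norm_num [M2, M4]
    simp_rw [h2, mul_ite, mul_zero]
    rw [Finset.sum_ite_eq]
    simp
  simp_rw [h1]
  have h3 : ∀ i : Fin n, x i * x i * (if i = j then 3 else 1)
      = x i ^ 2 + (if i = j then 2 * x i ^ 2 else 0) := by
    intro i
    split <;> ring
  simp_rw [h3]
  rw [Finset.sum_add_distrib, Finset.sum_ite_eq']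
  simp



/-! ### collapse lemmas -/

lemma cPair (s : Finset (Fin n)) (c : Fin n → ℝ) (v : ℝ) :
    ∑ i ∈ s, ∑ k ∈ s, (c i * c k) * (if i = k then v else 0) = v * ∑ i ∈ s, c i ^ 2 := by
  rw [Finset.mul_sum]
  refine Finset.sum_congr rfl fun i hi => ?_
  rw [Finset.sum_eq_single i (fun k _ hk => by simp [Ne.symm hk]) (fun h => absurd hi h)]
  simp [sq]
  ring

lemma cA (s : Finset (Fin n)) (c : Fin n → ℝ) :
    ∑ i ∈ s, ∑ l ∈ s, ∑ k ∈ s, ∑ m ∈ s, (c i * c k * (c l * c m))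
      * ((if i = k then (1:ℝ) else 0) * (if l = m then 1 else 0))
      = (∑ i ∈ s, c i ^ 2) * (∑ i ∈ s, c i ^ 2) := by
  rw [Finset.sum_mul_sum]
  refine Finset.sum_congr rfl fun i hi => Finset.sum_congr rfl fun l hl => ?_
  rw [Finset.sum_eq_single i (fun k _ hk => by simp [Ne.symm hk]) (fun h => absurd hi h)]
  rw [Finset.sum_eq_single l (fun m _ hm => by simp [Ne.symm hm]) (fun h => absurd hl h)]
  simp [sq]

lemma cB (s : Finset (Fin n)) (c : Fin n → ℝ) :
    ∑ i ∈ s, ∑ l ∈ s, ∑ k ∈ s, ∑ m ∈ s, (c i * c k * (c l * c m))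
      * ((if i = l then (1:ℝ) else 0) * (if k = m then 1 else 0))
      = (∑ i ∈ s, c i ^ 2) * (∑ i ∈ s, c i ^ 2) := by
  rw [Finset.sum_mul_sum]
  refine Finset.sum_congr rfl fun i hi => ?_
  rw [Finset.sum_eq_single i (fun l _ hl => by
      refine Finset.sum_eq_zero fun k _ => Finset.sum_eq_zero fun m _ => ?_
      simp [Ne.symm hl])
    (fun h => absurd hi h)]
  refine Finset.sum_congr rfl fun k hk => ?_
  rw [Finset.sum_eq_single k (fun m _ hm => by simp [Ne.symm hm]) (fun h => absurd hk h)]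
  simp [sq]
  ring

lemma cC (s : Finset (Fin n)) (c : Fin n → ℝ) :
    ∑ i ∈ s, ∑ l ∈ s, ∑ k ∈ s, ∑ m ∈ s, (c i * c k * (c l * c m))
      * ((if i = m then (1:ℝ) else 0) * (if k = l then 1 else 0))
      = (∑ i ∈ s, c i ^ 2) * (∑ i ∈ s, c i ^ 2) := by
  rw [Finset.sum_mul_sum]
  refine Finset.sum_congr rfl fun i hi => Finset.sum_congr rfl fun l hl => ?_
  rw [Finset.sum_eq_single l (fun k _ hk => by
      refine Finset.sum_eq_zero fun m _ => ?_
      simp [hk])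
    (fun h => absurd hl h)]
  rw [Finset.sum_eq_single i (fun m _ hm => by simp [Ne.symm hm]) (fun h => absurd hi h)]
  simp [sq]
  ring

/-! ### E2 -/

lemma E2_fun (x : Fin n → ℝ) (a : Fin n → ℝ) :
    ((∑ i, a i * x i)^2 * (a j)^2)^2
      = x j^4 * (a j)^8
      + (4 * x j^3) * (∑ i ∈ Finset.univ.erase j, x i * ((a j)^7 * a i))
      + (6 * x j^2) * (∑ i ∈ Finset.univ.erase j, ∑ k ∈ Finset.univ.erase j,
          (x i * x k) * ((a j)^6 * (a i * a k)))
      + (4 * x j) * (∑ i ∈ Finset.univ.erase j, ∑ k ∈ Finset.univ.erase j,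
          ∑ l ∈ Finset.univ.erase j, (x i * (x k * x l)) * ((a j)^5 * (a i * (a k * a l))))
      + ∑ i ∈ Finset.univ.erase j, ∑ l ∈ Finset.univ.erase j, ∑ k ∈ Finset.univ.erase j,
          ∑ m ∈ Finset.univ.erase j,
          (x i * x k * (x l * x m)) * ((a j)^4 * (a i * a k * (a l * a m))) := by
  set u : ℝ := ∑ i ∈ Finset.univ.erase j, a i * x i with hu
  have hP : (∑ i, a i * x i) = a j * x j + u :=
    (Finset.add_sum_erase Finset.univ (fun i => a i * x i) (Finset.mem_univ j)).symm
  have hU2 : u^2 = ∑ i ∈ Finset.univ.erase j, ∑ k ∈ Finset.univ.erase j,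
      (a i * x i) * (a k * x k) := by
    rw [sq, hu, Finset.sum_mul_sum]
  have hU3 : u^3 = ∑ i ∈ Finset.univ.erase j, ∑ k ∈ Finset.univ.erase j,
      ∑ l ∈ Finset.univ.erase j, (a i * x i) * (a k * x k) * (a l * x l) := by
    rw [pow_succ, hU2, Finset.sum_mul]
    refine Finset.sum_congr rfl fun i _ => ?_
    rw [Finset.sum_mul]
    refine Finset.sum_congr rfl fun k _ => ?_
    rw [hu, Finset.mul_sum]
  have hU4 : u^4 = ∑ i ∈ Finset.univ.erase j, ∑ l ∈ Finset.univ.erase j,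
      ∑ k ∈ Finset.univ.erase j, ∑ m ∈ Finset.univ.erase j,
      ((a i * x i) * (a k * x k)) * ((a l * x l) * (a m * x m)) := by
    rw [show (4:ℕ) = 2 + 2 from rfl, pow_add, hU2, Finset.sum_mul_sum]
    refine Finset.sum_congr rfl fun i _ => Finset.sum_congr rfl fun l _ => ?_
    rw [Finset.sum_mul]
    refine Finset.sum_congr rfl fun k _ => ?_
    rw [Finset.mul_sum]
  have hB1 : ∑ i ∈ Finset.univ.erase j, x i * ((a j)^7 * a i) = (a j)^7 * u := by
    rw [hu, Finset.mul_sum]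
    exact Finset.sum_congr rfl fun i _ => by ring
  have hB2 : ∑ i ∈ Finset.univ.erase j, ∑ k ∈ Finset.univ.erase j,
      (x i * x k) * ((a j)^6 * (a i * a k)) = (a j)^6 * u^2 := by
    rw [hU2, Finset.mul_sum]
    refine Finset.sum_congr rfl fun i _ => ?_
    rw [Finset.mul_sum]
    exact Finset.sum_congr rfl fun k _ => by ring
  have hB3 : ∑ i ∈ Finset.univ.erase j, ∑ k ∈ Finset.univ.erase j,
      ∑ l ∈ Finset.univ.erase j, (x i * (x k * x l)) * ((a j)^5 * (a i * (a k * a l)))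
      = (a j)^5 * u^3 := by
    rw [hU3, Finset.mul_sum]
    refine Finset.sum_congr rfl fun i _ => ?_
    rw [Finset.mul_sum]
    refine Finset.sum_congr rfl fun k _ => ?_
    rw [Finset.mul_sum]
    exact Finset.sum_congr rfl fun l _ => by ring
  have hB4 : ∑ i ∈ Finset.univ.erase j, ∑ l ∈ Finset.univ.erase j,
      ∑ k ∈ Finset.univ.erase j, ∑ m ∈ Finset.univ.erase j,
      (x i * x k * (x l * x m)) * ((a j)^4 * (a i * a k * (a l * a m)))
      = (a j)^4 * u^4 := by
    rw [hU4, Finset.mul_sum]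
    refine Finset.sum_congr rfl fun i _ => ?_
    rw [Finset.mul_sum]
    refine Finset.sum_congr rfl fun l _ => ?_
    rw [Finset.mul_sum]
    refine Finset.sum_congr rfl fun k _ => ?_
    rw [Finset.mul_sum]
    exact Finset.sum_congr rfl fun m _ => by ring
  rw [hB1, hB2, hB3, hB4, hP]
  ring

lemma E2_intg (x : Fin n → ℝ) :
    Integrable (fun a : Fin n → ℝ => ((∑ i, a i * x i)^2 * (a j)^2)^2) (μn n) := by
  simp_rw [E2_fun j x]
  refine ((((((intg_pow j 8).const_mul _).add ?_).add ?_).add ?_).add ?_)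
  · exact (integrable_finset_sum _ fun i _ => (intg_single j 7 i).const_mul _).const_mul _
  · exact (integrable_finset_sum _ fun i _ => integrable_finset_sum _ fun k _ =>
      (intg_pair j 6 i k).const_mul _).const_mul _
  · exact (integrable_finset_sum _ fun i _ => integrable_finset_sum _ fun k _ =>
      integrable_finset_sum _ fun l _ => (intg_triple j 5 i k l).const_mul _).const_mul _
  · exact integrable_finset_sum _ fun i _ => integrable_finset_sum _ fun l _ =>
      integrable_finset_sum _ fun k _ => integrable_finset_sum _ fun m _ =>
      (intg_quad j 4 i k l m).const_mul _

lemma E2_val (x : Fin n → ℝ) :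
    ∫ a, ((∑ i, a i * x i)^2 * (a j)^2)^2 ∂(μn n)
      = 105 * x j^4 + 90 * x j^2 * (∑ i ∈ Finset.univ.erase j, x i ^ 2)
        + 9 * (∑ i ∈ Finset.univ.erase j, x i ^ 2)^2 := by
  have I1 : Integrable (fun a : Fin n → ℝ => x j^4 * (a j)^8) (μn n) :=
    (intg_pow j 8).const_mul _
  have I2 : Integrable (fun a : Fin n → ℝ => (4 * x j^3) *
      (∑ i ∈ Finset.univ.erase j, x i * ((a j)^7 * a i))) (μn n) :=
    (integrable_finset_sum _ fun i _ => (intg_single j 7 i).const_mul _).const_mul _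
  have I3 : Integrable (fun a : Fin n → ℝ => (6 * x j^2) *
      (∑ i ∈ Finset.univ.erase j, ∑ k ∈ Finset.univ.erase j,
        (x i * x k) * ((a j)^6 * (a i * a k)))) (μn n) :=
    (integrable_finset_sum _ fun i _ => integrable_finset_sum _ fun k _ =>
      (intg_pair j 6 i k).const_mul _).const_mul _
  have I4 : Integrable (fun a : Fin n → ℝ => (4 * x j) *
      (∑ i ∈ Finset.univ.erase j, ∑ k ∈ Finset.univ.erase j, ∑ l ∈ Finset.univ.erase j,
        (x i * (x k * x l)) * ((a j)^5 * (a i * (a k * a l))))) (μn n) :=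
    (integrable_finset_sum _ fun i _ => integrable_finset_sum _ fun k _ =>
      integrable_finset_sum _ fun l _ => (intg_triple j 5 i k l).const_mul _).const_mul _
  have I5 : Integrable (fun a : Fin n → ℝ =>
      ∑ i ∈ Finset.univ.erase j, ∑ l ∈ Finset.univ.erase j, ∑ k ∈ Finset.univ.erase j,
        ∑ m ∈ Finset.univ.erase j,
        (x i * x k * (x l * x m)) * ((a j)^4 * (a i * a k * (a l * a m)))) (μn n) :=
    integrable_finset_sum _ fun i _ => integrable_finset_sum _ fun l _ =>
      integrable_finset_sum _ fun k _ => integrable_finset_sum _ fun m _ =>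
      (intg_quad j 4 i k l m).const_mul _
  have I12 : Integrable (fun a : Fin n → ℝ => x j^4 * (a j)^8 + (4 * x j^3) * (∑ i ∈ Finset.univ.erase j, x i * ((a j)^7 * a i))) (μn n) := I1.add I2
  have I123 : Integrable (fun a : Fin n → ℝ => x j^4 * (a j)^8 + (4 * x j^3) * (∑ i ∈ Finset.univ.erase j, x i * ((a j)^7 * a i)) + (6 * x j^2) * (∑ i ∈ Finset.univ.erase j, ∑ k ∈ Finset.univ.erase j,
        (x i * x k) * ((a j)^6 * (a i * a k)))) (μn n) := I12.add I3
  have I1234 : Integrable (fun a : Fin n → ℝ => x j^4 * (a j)^8 + (4 * x j^3) * (∑ i ∈ Finset.univ.erase j, x i * ((a j)^7 * a i)) + (6 * x j^2) * (∑ i ∈ Finset.univ.erase j, ∑ k ∈ Finset.univ.erase j,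
        (x i * x k) * ((a j)^6 * (a i * a k))) + (4 * x j) * (∑ i ∈ Finset.univ.erase j, ∑ k ∈ Finset.univ.erase j, ∑ l ∈ Finset.univ.erase j,
        (x i * (x k * x l)) * ((a j)^5 * (a i * (a k * a l))))) (μn n) := I123.add I4
  simp_rw [E2_fun j x]
  rw [integral_add I1234 I5, integral_add I123 I4, integral_add I12 I3, integral_add I1 I2]
  have h1 : ∫ a, x j^4 * (a j)^8 ∂(μn n) = x j^4 * 105 := by
    rw [integral_const_mul, int_pow, M8]
  have h2 : ∫ a, (4 * x j^3) * (∑ i ∈ Finset.univ.erase j, x i * ((a j)^7 * a i)) ∂(μn n)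
      = 0 := by
    rw [integral_const_mul,
      integral_finset_sum _ (fun i _ => (intg_single j 7 i).const_mul _)]
    rw [Finset.sum_eq_zero, mul_zero]
    intro i hi
    rw [integral_const_mul, int_single_zero j 7 i (Finset.mem_erase.mp hi).1, mul_zero]
  have h3 : ∫ a, (6 * x j^2) * (∑ i ∈ Finset.univ.erase j, ∑ k ∈ Finset.univ.erase j,
      (x i * x k) * ((a j)^6 * (a i * a k))) ∂(μn n)
      = 6 * x j^2 * (15 * ∑ i ∈ Finset.univ.erase j, x i ^ 2) := by
    rw [integral_const_mul,
      integral_finset_sum _ (fun i _ => integrable_finset_sum _ fun k _ =>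
        (intg_pair j 6 i k).const_mul _)]
    congr 1
    have : ∀ i ∈ Finset.univ.erase j,
        ∫ a, ∑ k ∈ Finset.univ.erase j, (x i * x k) * ((a j)^6 * (a i * a k)) ∂(μn n)
        = ∑ k ∈ Finset.univ.erase j, (x i * x k) * (if i = k then 15 else 0) := by
      intro i hi
      rw [integral_finset_sum _ (fun k _ => (intg_pair j 6 i k).const_mul _)]
      refine Finset.sum_congr rfl fun k _ => ?_
      rw [integral_const_mul, int_pair j 6 i k]
      simp [(Finset.mem_erase.mp hi).1, M6]
    rw [Finset.sum_congr rfl this, cPair]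
  have h4 : ∫ a, (4 * x j) * (∑ i ∈ Finset.univ.erase j, ∑ k ∈ Finset.univ.erase j,
      ∑ l ∈ Finset.univ.erase j, (x i * (x k * x l)) * ((a j)^5 * (a i * (a k * a l)))) ∂(μn n)
      = 0 := by
    rw [integral_const_mul,
      integral_finset_sum _ (fun i _ => integrable_finset_sum _ fun k _ =>
        integrable_finset_sum _ fun l _ => (intg_triple j 5 i k l).const_mul _)]
    rw [Finset.sum_eq_zero, mul_zero]
    intro i hi
    rw [integral_finset_sum _ (fun k _ => integrable_finset_sum _ fun l _ =>
      (intg_triple j 5 i k l).const_mul _)]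
    refine Finset.sum_eq_zero fun k hk => ?_
    rw [integral_finset_sum _ (fun l _ => (intg_triple j 5 i k l).const_mul _)]
    refine Finset.sum_eq_zero fun l hl => ?_
    rw [integral_const_mul, int_triple_five j i k l (Finset.mem_erase.mp hi).1
      (Finset.mem_erase.mp hk).1 (Finset.mem_erase.mp hl).1, mul_zero]
  have h5 : ∫ a, (∑ i ∈ Finset.univ.erase j, ∑ l ∈ Finset.univ.erase j,
      ∑ k ∈ Finset.univ.erase j, ∑ m ∈ Finset.univ.erase j,
      (x i * x k * (x l * x m)) * ((a j)^4 * (a i * a k * (a l * a m)))) ∂(μn n)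
      = 9 * (∑ i ∈ Finset.univ.erase j, x i ^ 2)^2 := by
    rw [integral_finset_sum _ (fun i _ => integrable_finset_sum _ fun l _ =>
      integrable_finset_sum _ fun k _ => integrable_finset_sum _ fun m _ =>
      (intg_quad j 4 i k l m).const_mul _)]
    have hsum : ∀ i ∈ Finset.univ.erase j,
        ∫ a, ∑ l ∈ Finset.univ.erase j, ∑ k ∈ Finset.univ.erase j, ∑ m ∈ Finset.univ.erase j,
          (x i * x k * (x l * x m)) * ((a j)^4 * (a i * a k * (a l * a m))) ∂(μn n)
        = ∑ l ∈ Finset.univ.erase j, ∑ k ∈ Finset.univ.erase j, ∑ m ∈ Finset.univ.erase j,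
          (x i * x k * (x l * x m)) * (3 * ((if i = k then 1 else 0) * (if l = m then 1 else 0)
           + (if i = l then 1 else 0) * (if k = m then 1 else 0)
           + (if i = m then 1 else 0) * (if k = l then 1 else 0))) := by
      intro i hi
      rw [integral_finset_sum _ (fun l _ => integrable_finset_sum _ fun k _ =>
        integrable_finset_sum _ fun m _ => (intg_quad j 4 i k l m).const_mul _)]
      refine Finset.sum_congr rfl fun l hl => ?_
      rw [integral_finset_sum _ (fun k _ => integrable_finset_sum _ fun m _ =>
        (intg_quad j 4 i k l m).const_mul _)]
      refine Finset.sum_congr rfl fun k hk => ?_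
      rw [integral_finset_sum _ (fun m _ => (intg_quad j 4 i k l m).const_mul _)]
      refine Finset.sum_congr rfl fun m hm => ?_
      rw [integral_const_mul, int_quad_four j i k l m (Finset.mem_erase.mp hi).1
        (Finset.mem_erase.mp hk).1 (Finset.mem_erase.mp hl).1 (Finset.mem_erase.mp hm).1]
    rw [Finset.sum_congr rfl hsum]
    have hsplit : ∀ i l k m : Fin n,
        (x i * x k * (x l * x m)) * (3 * ((if i = k then (1:ℝ) else 0) * (if l = m then 1 else 0)
           + (if i = l then 1 else 0) * (if k = m then 1 else 0)
           + (if i = m then 1 else 0) * (if k = l then 1 else 0)))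
        = 3 * ((x i * x k * (x l * x m)) * ((if i = k then 1 else 0) * (if l = m then 1 else 0)))
        + 3 * ((x i * x k * (x l * x m)) * ((if i = l then 1 else 0) * (if k = m then 1 else 0)))
        + 3 * ((x i * x k * (x l * x m)) * ((if i = m then 1 else 0) * (if k = l then 1 else 0)))
        := fun i l k m => by ring
    simp_rw [hsplit, Finset.sum_add_distrib, ← Finset.mul_sum]
    rw [cA, cB, cC]
    ring
  rw [h1, h2, h3, h4, h5]
  ring


end StdGaussAux

open MeasureTheory ProbabilityTheory

/-- The law of a random vector in `ℝⁿ` with i.i.d. standard Gaussian `N(0,1)` entries. -/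
noncomputable def stdGaussianVec (n : ℕ) : Measure (Fin n → ℝ) :=
  Measure.pi fun _ => gaussianReal 0 1

/-- For the random variable `X = ‖x‖₂² + 2 x_j² − ⟨a,x⟩² a_j²` with `a` a standard Gaussian
vector: (i) `X ≤ ‖x‖₂² + 2 x_j² ≤ 3‖x‖₂²`; (ii) `E[X] = 0`;
(iii) `E[X²] = 20 x_j⁴ + 68 ‖x‖₂² x_j² + 8 ‖x‖₂⁴ ≤ 96 ‖x‖₂⁴`. -/
theorem stmt_3 (n : ℕ) (hn : 1 ≤ n) (x : Fin n → ℝ) (j : Fin n)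
    (X : (Fin n → ℝ) → ℝ)
    (hX : ∀ a, X a = (∑ i, (x i) ^ 2) + 2 * (x j) ^ 2 - (∑ i, a i * x i) ^ 2 * (a j) ^ 2) :
    (∀ a, X a ≤ (∑ i, (x i) ^ 2) + 2 * (x j) ^ 2) ∧
    ((∑ i, (x i) ^ 2) + 2 * (x j) ^ 2 ≤ 3 * ∑ i, (x i) ^ 2) ∧
    (∫ a, X a ∂(stdGaussianVec n) = 0) ∧
    (∫ a, (X a) ^ 2 ∂(stdGaussianVec n)
        = 20 * (x j) ^ 4 + 68 * (∑ i, (x i) ^ 2) * (x j) ^ 2 + 8 * (∑ i, (x i) ^ 2) ^ 2) ∧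
    (∫ a, (X a) ^ 2 ∂(stdGaussianVec n) ≤ 96 * (∑ i, (x i) ^ 2) ^ 2) := by
  have hmu : stdGaussianVec n = StdGaussAux.μn n := rfl
  have hxj : (x j) ^ 2 ≤ ∑ i, (x i) ^ 2 :=
    Finset.single_le_sum (f := fun i => (x i) ^ 2) (fun i _ => sq_nonneg _) (Finset.mem_univ j)
  have hS0 : (0:ℝ) ≤ ∑ i, (x i) ^ 2 := Finset.sum_nonneg fun i _ => sq_nonneg _
  have hT : (x j) ^ 2 + ∑ i ∈ Finset.univ.erase j, (x i) ^ 2 = ∑ i, (x i) ^ 2 :=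
    Finset.add_sum_erase Finset.univ (fun i => (x i) ^ 2) (Finset.mem_univ j)
  have hXfun : X = fun a => ((∑ i, (x i) ^ 2) + 2 * (x j) ^ 2)
      - (∑ i, a i * x i) ^ 2 * (a j) ^ 2 := funext hX
  have hint : ∫ a, X a ∂(stdGaussianVec n) = 0 := by
    rw [hXfun, hmu, integral_sub (integrable_const _) (StdGaussAux.E1_intg j x),
      integral_const, StdGaussAux.E1_val j x]
    simp
  have hint2 : ∫ a, (X a) ^ 2 ∂(stdGaussianVec n)
      = 20 * (x j) ^ 4 + 68 * (∑ i, (x i) ^ 2) * (x j) ^ 2 + 8 * (∑ i, (x i) ^ 2) ^ 2 := by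
    have hsq : (fun a : Fin n → ℝ => (X a) ^ 2)
        = fun a => (((∑ i, (x i) ^ 2) + 2 * (x j) ^ 2) ^ 2
          - (2 * ((∑ i, (x i) ^ 2) + 2 * (x j) ^ 2)) * ((∑ i, a i * x i) ^ 2 * (a j) ^ 2))
          + ((∑ i, a i * x i) ^ 2 * (a j) ^ 2) ^ 2 := by
      funext a
      rw [hX a]
      ring
    have IC : Integrable (fun a : Fin n → ℝ =>
        ((∑ i, (x i) ^ 2) + 2 * (x j) ^ 2) ^ 2
          - (2 * ((∑ i, (x i) ^ 2) + 2 * (x j) ^ 2)) * ((∑ i, a i * x i) ^ 2 * (a j) ^ 2))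
        (StdGaussAux.μn n) :=
      (integrable_const _).sub ((StdGaussAux.E1_intg j x).const_mul _)
    rw [hsq, hmu,
      integral_add IC (StdGaussAux.E2_intg j x),
      integral_sub (integrable_const _) ((StdGaussAux.E1_intg j x).const_mul _),
      integral_const, integral_const_mul, StdGaussAux.E1_val j x, StdGaussAux.E2_val j x]
    simp only [probReal_univ, measure_univ, ENNReal.toReal_one, smul_eq_mul, one_mul]
    rw [← hT]
    ring
  refine ⟨?_, ?_, hint, hint2, ?_⟩
  · intro a
    rw [hX a]
    have : (0:ℝ) ≤ (∑ i, a i * x i) ^ 2 * (a j) ^ 2 := by positivity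
    linarith
  · linarith
  · rw [hint2]
    nlinarith [mul_le_mul hxj hxj (sq_nonneg (x j)) hS0,
      mul_le_mul_of_nonneg_left hxj hS0]
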